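/- Let L > 0, μ > 0, M ≥ 0, and let ρ : [0,L] → ℝ be continuous with |ρ(ξ)| ≤ M for all ξ. Let η : [0,L] → ℝ be twice continuously differentiable with η''(ξ) + μ²η(ξ) = ρ(ξ)η(ξ) for all ξ ∈ [0,L] and η(0) = 0, and set α := η'(0)/μ. Then for every ξ ∈ [0,L], |η(ξ) − α·sin(μξ)| ≤ |α|·(e^{Mξ/μ} − 1); in particular sup_{ξ∈[0,L]} |η(ξ) − α·sin(μξ)| ≤ |α|·(e^{ML/μ} − 1). -/

import Mathlib

open Set

noncomputable section

/-- the Volterra/Gronwall perturbation estimate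
`|η(ξ) - α sin(μξ)| ≤ |α|(e^{Mξ/μ} - 1)` for solutions of `η'' + μ²η = ρη`, `η(0) = 0`,
with `α = η'(0)/μ`. -/
theorem stmt6 (L μ M : ℝ) (hL : 0 < L) (hμ : 0 < μ) (hM : 0 ≤ M)
    (ρ : ℝ → ℝ) (hρc : ContinuousOn ρ (Set.Icc 0 L))
    (hρ : ∀ ξ ∈ Set.Icc (0 : ℝ) L, |ρ ξ| ≤ M)
    (η η' η'' : ℝ → ℝ)
    (hd1 : ∀ ξ ∈ Set.Icc (0 : ℝ) L, HasDerivAt η (η' ξ) ξ)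
    (hd2 : ∀ ξ ∈ Set.Icc (0 : ℝ) L, HasDerivAt η' (η'' ξ) ξ)
    (hd2c : ContinuousOn η'' (Set.Icc 0 L))
    (heq : ∀ ξ ∈ Set.Icc (0 : ℝ) L, η'' ξ + μ ^ 2 * η ξ = ρ ξ * η ξ)
    (hη0 : η 0 = 0)
    (α : ℝ) (hα : α = η' 0 / μ) :
    (∀ ξ ∈ Set.Icc (0 : ℝ) L,
      |η ξ - α * Real.sin (μ * ξ)| ≤ |α| * (Real.exp (M * ξ / μ) - 1)) ∧
    (∀ ξ ∈ Set.Icc (0 : ℝ) L,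
      |η ξ - α * Real.sin (μ * ξ)| ≤ |α| * (Real.exp (M * L / μ) - 1)) := by
  -- `w ξ = η ξ - α sin (μ ξ)` and its derivative
  set w : ℝ → ℝ := fun ξ => η ξ - α * Real.sin (μ * ξ) with hw_def
  set w' : ℝ → ℝ := fun ξ => η' ξ - α * (Real.cos (μ * ξ) * μ) with hw'_def
  have hsin : ∀ ξ : ℝ, HasDerivAt (fun t => α * Real.sin (μ * t))
      (α * (Real.cos (μ * ξ) * μ)) ξ := by
    intro ξ
    have h1 : HasDerivAt (fun t : ℝ => μ * t) μ ξ := by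
      simpa using (hasDerivAt_id ξ).const_mul μ
    exact (h1.sin).const_mul α
  have hw : ∀ ξ ∈ Set.Icc (0 : ℝ) L, HasDerivAt w (w' ξ) ξ := fun ξ hξ =>
    (hd1 ξ hξ).sub (hsin ξ)
  have hcos : ∀ ξ : ℝ, HasDerivAt (fun t => α * (Real.cos (μ * t) * μ))
      (-(α * μ ^ 2 * Real.sin (μ * ξ))) ξ := by
    intro ξ
    have h1 : HasDerivAt (fun t : ℝ => μ * t) μ ξ := by
      simpa using (hasDerivAt_id ξ).const_mul μ
    have := ((h1.cos).mul_const μ).const_mul α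
    refine this.congr_deriv (Eq.symm ?_)
    ring
  have hw' : ∀ ξ ∈ Set.Icc (0 : ℝ) L,
      HasDerivAt w' (ρ ξ * η ξ - μ ^ 2 * w ξ) ξ := by
    intro ξ hξ
    have := (hd2 ξ hξ).sub (hcos ξ)
    refine this.congr_deriv (Eq.symm ?_)
    have h := heq ξ hξ
    simp only [hw_def]
    ring_nf
    nlinarith [h]
  -- complex helper functions
  set u : ℝ → ℂ := fun ξ => (w' ξ : ℂ) + (μ : ℂ) * (w ξ : ℂ) * Complex.I with hu_def
  set e : ℝ → ℂ := fun ξ => Complex.exp ((-(μ * ξ) : ℝ) * Complex.I) with he_def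
  set z : ℝ → ℂ := fun ξ => e ξ * u ξ with hz_def
  set zd : ℝ → ℂ := fun ξ => e ξ * ((ρ ξ * η ξ : ℝ) : ℂ) with hzd_def
  have he' : ∀ ξ : ℝ, HasDerivAt e ((-μ : ℂ) * Complex.I * e ξ) ξ := by
    intro ξ
    have h1 : HasDerivAt (fun t : ℝ => ((-(μ * t) : ℝ) : ℂ) * Complex.I)
        ((-μ : ℂ) * Complex.I) ξ := by
      have h0 : HasDerivAt (fun t : ℝ => (-(μ * t) : ℝ)) (-μ) ξ := by
        exact ((hasDerivAt_id ξ).const_mul μ).neg.congr_deriv (by ring)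
      simpa using (h0.ofReal_comp.mul_const Complex.I)
    simpa [he_def, mul_comm] using h1.cexp
  have hu' : ∀ ξ ∈ Set.Icc (0 : ℝ) L,
      HasDerivAt u (((ρ ξ * η ξ : ℝ) : ℂ) + (μ : ℂ) * Complex.I * u ξ) ξ := by
    intro ξ hξ
    have h1 := (hw' ξ hξ).ofReal_comp
    have h2 := ((hw ξ hξ).ofReal_comp.const_mul (μ : ℂ)).mul_const Complex.I
    have := h1.add h2
    refine this.congr_deriv (Eq.symm ?_)
    have hI : (Complex.I : ℂ) * Complex.I = -1 := Complex.I_mul_I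
    simp only [hu_def]
    push_cast
    linear_combination ((μ : ℂ) ^ 2 * (w ξ : ℂ)) * hI
  have hz' : ∀ ξ ∈ Set.Icc (0 : ℝ) L, HasDerivAt z (zd ξ) ξ := by
    intro ξ hξ
    have := (he' ξ).mul (hu' ξ hξ)
    refine this.congr_deriv (Eq.symm ?_)
    simp only [hzd_def]
    ring
  have hzc : ContinuousOn z (Set.Icc 0 L) := fun x hx =>
    (hz' x hx).continuousAt.continuousWithinAt
  -- norm of e is 1
  have he_norm : ∀ ξ : ℝ, ‖e ξ‖ = 1 := by
    intro ξ
    simp only [he_def]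
    rw [Complex.norm_exp]
    simp
  -- |w ξ| ≤ ‖z ξ‖ / μ
  have hwz : ∀ ξ : ℝ, μ * |w ξ| ≤ ‖z ξ‖ := by
    intro ξ
    have h1 : ‖z ξ‖ = ‖u ξ‖ := by
      simp only [hz_def, norm_mul, he_norm, one_mul]
    rw [h1]
    have h2 : (u ξ).im = μ * w ξ := by simp [hu_def]
    have h3 : |(u ξ).im| ≤ ‖u ξ‖ := Complex.abs_im_le_norm (u ξ)
    rw [h2] at h3
    calc μ * |w ξ| = |μ * w ξ| := by rw [abs_mul, abs_of_pos hμ]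
      _ ≤ ‖u ξ‖ := h3
  -- z 0 = 0
  have hz0 : ‖z 0‖ ≤ 0 := by
    have hw0 : w 0 = 0 := by simp [hw_def, hη0]
    have hw'0 : w' 0 = 0 := by
      simp only [hw'_def]
      simp [hα, div_mul_cancel₀ _ hμ.ne']
    simp [hz_def, hu_def, hw0, hw'0]
  -- bound on the derivative
  have hbound : ∀ ξ ∈ Set.Ico (0 : ℝ) L, ‖zd ξ‖ ≤ (M / μ) * ‖z ξ‖ + M * |α| := by
    intro ξ hξ
    have hξ' : ξ ∈ Set.Icc (0 : ℝ) L := Set.Ico_subset_Icc_self hξ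
    have h1 : ‖zd ξ‖ = |ρ ξ| * |η ξ| := by
      simp only [hzd_def, norm_mul, he_norm, one_mul, Complex.norm_real,
        Real.norm_eq_abs, abs_mul]
    rw [h1]

    have hη_le : |η ξ| ≤ |α| + |w ξ| := by
      have : η ξ = w ξ + α * Real.sin (μ * ξ) := by simp [hw_def]
      rw [this]
      calc |w ξ + α * Real.sin (μ * ξ)| ≤ |w ξ| + |α * Real.sin (μ * ξ)| := abs_add_le _ _
        _ ≤ |w ξ| + |α| * 1 := by
            rw [abs_mul]
            gcongr
            exact abs_le.mpr ⟨Real.neg_one_le_sin _, Real.sin_le_one _⟩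
        _ = |α| + |w ξ| := by ring
    have hwle : |w ξ| ≤ ‖z ξ‖ / μ := by
      rw [le_div_iff₀ hμ]
      calc |w ξ| * μ = μ * |w ξ| := by ring
        _ ≤ ‖z ξ‖ := hwz ξ
    calc |ρ ξ| * |η ξ| ≤ M * (|α| + (‖z ξ‖ / μ)) := by
          apply mul_le_mul (hρ ξ hξ') (hη_le.trans (by linarith)) (abs_nonneg _) hM
      _ = (M / μ) * ‖z ξ‖ + M * |α| := by field_simp; ring
  -- Grönwall
  have hg := norm_le_gronwallBound_of_norm_deriv_right_le hzc
    (fun x hx => (hz' x (Set.Ico_subset_Icc_self hx)).hasDerivWithinAt) hz0 hbound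
  have key : ∀ ξ ∈ Set.Icc (0 : ℝ) L,
      |η ξ - α * Real.sin (μ * ξ)| ≤ |α| * (Real.exp (M * ξ / μ) - 1) := by
    intro ξ hξ
    have hz_le := hg ξ hξ
    rw [sub_zero] at hz_le
    have hgb : gronwallBound 0 (M / μ) (M * |α|) ξ ≤ μ * (|α| * (Real.exp (M * ξ / μ) - 1)) := by
      rcases eq_or_lt_of_le hM with hM0 | hMpos
      · rw [← hM0]
        simp [gronwallBound_K0]
      · have hK : (M / μ) ≠ 0 := (div_pos hMpos hμ).ne'
        simp only [gronwallBound_of_K_ne_0 hK, zero_mul, zero_add]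
        have harg : M / μ * ξ = M * ξ / μ := by ring
        have h2 : M * |α| / (M / μ) = μ * |α| := by
          field_simp
        rw [harg, h2]
        exact le_of_eq (by ring)
    have h1 : μ * |w ξ| ≤ μ * (|α| * (Real.exp (M * ξ / μ) - 1)) :=
      le_trans (hwz ξ) (le_trans hz_le hgb)
    have := (mul_le_mul_iff_right₀ hμ).mp h1
    simpa [hw_def] using this
  refine ⟨key, fun ξ hξ => ?_⟩
  refine (key ξ hξ).trans ?_
  have hexp : Real.exp (M * ξ / μ) ≤ Real.exp (M * L / μ) := by
    apply Real.exp_le_exp.mpr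
    gcongr
    exact hξ.2
  exact mul_le_mul_of_nonneg_left (by linarith) (abs_nonneg α)
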